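/- If m ≥ 1 and n ≥ 2 are integers with n ≡ 0 (mod 3), then the bondage number of K_m ⊠ P_n satisfies b(K_m ⊠ P_n) ≥ ⌈m/2⌉; equivalently, for every edge set Z ⊆ E(K_m ⊠ P_n) with |Z| < ⌈m/2⌉, one has γ(K_m ⊠ P_n − Z) = γ(K_m ⊠ P_n). -/

import Mathlib

open SimpleGraph Finset

/-- `D` is a dominating set of `G`: every vertex is in `D` or adjacent to a vertex of `D`. -/
def SimpleGraph.IsDominatingSet {V : Type*} (G : SimpleGraph V) (D : Set V) : Prop :=
  ∀ v : V, v ∈ D ∨ ∃ u ∈ D, G.Adj u v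

/-- The domination number of a finite graph. -/
noncomputable def SimpleGraph.dominationNumber {V : Type*} [Fintype V]
    (G : SimpleGraph V) : ℕ :=
  sInf {k | ∃ D : Finset V, D.card = k ∧ G.IsDominatingSet ↑D}

/-- The bondage number of a finite graph: the least size of a set of edges whose removal
increases the domination number. -/
noncomputable def SimpleGraph.bondageNumber {V : Type*} [Fintype V]
    (G : SimpleGraph V) : ℕ :=
  sInf {k | ∃ Z : Finset (Sym2 V), Z.card = k ∧ (↑Z : Set (Sym2 V)) ⊆ G.edgeSet ∧
    G.dominationNumber < (G.deleteEdges ↑Z).dominationNumber}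

/-- The strong product of two simple graphs. -/
def SimpleGraph.strongProd {V W : Type*} (G : SimpleGraph V) (H : SimpleGraph W) :
    SimpleGraph (V × W) :=
  SimpleGraph.fromRel (fun a b =>
    (a.1 = b.1 ∧ H.Adj a.2 b.2) ∨ (G.Adj a.1 b.1 ∧ a.2 = b.2) ∨
      (G.Adj a.1 b.1 ∧ H.Adj a.2 b.2))

infixl:70 " ⊠ " => SimpleGraph.strongProd

lemma aux_dom_nonempty {V : Type*} [Fintype V] (G : SimpleGraph V) :
    {k | ∃ D : Finset V, D.card = k ∧ G.IsDominatingSet ↑D}.Nonempty :=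
  ⟨Finset.univ.card, Finset.univ, rfl, fun v => Or.inl (by simp)⟩

lemma aux_domNum_le {V : Type*} [Fintype V] (G : SimpleGraph V) (D : Finset V)
    (h : G.IsDominatingSet ↑D) : G.dominationNumber ≤ D.card :=
  Nat.sInf_le ⟨D, rfl, h⟩

lemma aux_le_domNum {V : Type*} [Fintype V] (G : SimpleGraph V) (c : ℕ)
    (h : ∀ D : Finset V, G.IsDominatingSet ↑D → c ≤ D.card) :
    c ≤ G.dominationNumber :=
  le_csInf (aux_dom_nonempty G) (by rintro k ⟨D, rfl, hD⟩; exact h D hD)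

lemma strong_adj_iff {m n : ℕ} (a b : Fin m × Fin n) :
    ((⊤ : SimpleGraph (Fin m)) ⊠ pathGraph n).Adj a b ↔
      a ≠ b ∧ (a.2 : ℕ) ≤ (b.2 : ℕ) + 1 ∧ (b.2 : ℕ) ≤ (a.2 : ℕ) + 1 := by
  obtain ⟨a1, a2⟩ := a; obtain ⟨b1, b2⟩ := b
  simp only [SimpleGraph.strongProd, SimpleGraph.fromRel_adj, SimpleGraph.top_adj,
    pathGraph_adj, ne_eq, Prod.mk.injEq, not_and, Fin.ext_iff]
  omega

lemma aux_lower {m n : ℕ} (hm : 1 ≤ m) (h3 : n % 3 = 0)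
    (H : SimpleGraph (Fin m × Fin n))
    (hH : ∀ a b : Fin m × Fin n, H.Adj a b →
      (a.2 : ℕ) ≤ (b.2 : ℕ) + 1 ∧ (b.2 : ℕ) ≤ (a.2 : ℕ) + 1)
    (D : Finset (Fin m × Fin n)) (hD : H.IsDominatingSet ↑D) :
    n / 3 ≤ D.card := by
  have key := Finset.card_le_card_of_surjOn (s := D) (t := Finset.range (n / 3))
    (fun u => (u.2 : ℕ) / 3) ?_
  · simpa using key
  · intro k hk
    simp only [Finset.coe_range, Set.mem_Iio] at hk
    have hcol : 3 * k + 1 < n := by omega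
    rcases hD (⟨0, hm⟩, ⟨3 * k + 1, hcol⟩) with h | ⟨u, hu, hadj⟩
    · exact ⟨_, h, by simp; omega⟩
    · have h2 := hH u _ hadj
      simp only at h2
      exact ⟨u, hu, by simp at h2 ⊢; omega⟩

lemma aux_upper {m n : ℕ} (hm : 1 ≤ m) (hn : 3 ≤ n) (h3 : n % 3 = 0)
    (Z : Finset (Sym2 (Fin m × Fin n))) (hZ : 2 * Z.card < m) :
    ∃ D : Finset (Fin m × Fin n), D.card = n / 3 ∧
      (((⊤ : SimpleGraph (Fin m)) ⊠ pathGraph n).deleteEdges ↑Z).IsDominatingSet ↑D := by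
  classical
  have hrow : ∀ k : ℕ, ∃ i : Fin m, ∀ e ∈ Z, ∀ v : Fin m × Fin n, v ∈ e →
      ¬(v.1 = i ∧ (v.2 : ℕ) = 3 * k + 1) := by
    intro k
    by_contra hcon
    push_neg at hcon
    set f : Sym2 (Fin m × Fin n) → Finset (Fin m) :=
      fun e => Sym2.lift ⟨fun a b => ({a.1, b.1} : Finset (Fin m)),
        by intro a b; simp [Finset.pair_comm]⟩ e with hf
    have hsub : (Finset.univ : Finset (Fin m)) ⊆ Z.biUnion f := by
      intro i _
      obtain ⟨e, he, v, hv, hv1, _⟩ := hcon i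
      simp only [Finset.mem_biUnion]
      refine ⟨e, he, ?_⟩
      induction e using Sym2.ind with
      | _ a b =>
        rcases Sym2.mem_iff.mp hv with rfl | rfl
        · simp [hf, ← hv1]
        · simp [hf, ← hv1]
    have h1 : m ≤ (Z.biUnion f).card := by
      simpa using Finset.card_le_card hsub
    have h2 : (Z.biUnion f).card ≤ 2 * Z.card := by
      refine le_trans Finset.card_biUnion_le ?_
      have : ∀ e ∈ Z, (f e).card ≤ 2 := by
        intro e _
        induction e using Sym2.ind with
        | _ a b =>
          simp only [hf, Sym2.lift_mk]
          exact le_trans (Finset.card_insert_le _ _) (by simp)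
      calc ∑ e ∈ Z, (f e).card ≤ ∑ _e ∈ Z, 2 := Finset.sum_le_sum this
        _ = 2 * Z.card := by rw [Finset.sum_const, smul_eq_mul, mul_comm]
    omega
  choose row hrowspec using hrow
  have hnpos : 0 < n := by omega
  set col : ℕ → Fin n := fun k => ⟨(3 * k + 1) % n, Nat.mod_lt _ hnpos⟩ with hcoldef
  set D := (Finset.range (n / 3)).image (fun k => (row k, col k)) with hD
  refine ⟨D, ?_, ?_⟩
  · rw [hD, Finset.card_image_of_injOn, Finset.card_range]
    intro a ha b hb hab
    simp only [Finset.coe_range, Set.mem_Iio] at ha hb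
    have h := congrArg (fun p => ((p.2 : Fin n) : ℕ)) hab
    simp only [hcoldef] at h
    rw [Nat.mod_eq_of_lt (by omega), Nat.mod_eq_of_lt (by omega)] at h
    omega
  · intro v
    have hvlt : (v.2 : ℕ) < n := v.2.isLt
    set k := (v.2 : ℕ) / 3 with hk
    have hkr : k < n / 3 := by omega
    have hcolval : ((col k : Fin n) : ℕ) = 3 * k + 1 := by
      simp only [hcoldef]; exact Nat.mod_eq_of_lt (by omega)
    have hmem : (row k, col k) ∈ D := by
      rw [hD]; exact Finset.mem_image.mpr ⟨k, Finset.mem_range.mpr hkr, rfl⟩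
    by_cases hv : v = (row k, col k)
    · left; rw [hv]; exact hmem
    · right
      refine ⟨(row k, col k), hmem, ?_⟩
      rw [SimpleGraph.deleteEdges_adj]
      constructor
      · rw [strong_adj_iff]
        refine ⟨fun h => hv h.symm, ?_⟩
        have hv2 : (((row k, col k) : Fin m × Fin n).2 : ℕ) = 3 * k + 1 := hcolval
        rw [hv2]
        omega
      · intro hZmem
        rw [Finset.mem_coe] at hZmem
        exact hrowspec k _ hZmem (row k, col k) (Sym2.mem_mk_left _ _)
          ⟨rfl, hcolval⟩

lemma aux_domNum_eq {m n : ℕ} (hm : 1 ≤ m) (hn : 3 ≤ n) (h3 : n % 3 = 0)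
    (Z : Finset (Sym2 (Fin m × Fin n))) (hZ : 2 * Z.card < m) :
    (((⊤ : SimpleGraph (Fin m)) ⊠ pathGraph n).deleteEdges ↑Z).dominationNumber = n / 3 := by
  obtain ⟨D, hc, hd⟩ := aux_upper hm hn h3 Z hZ
  refine le_antisymm (hc ▸ aux_domNum_le _ D hd) ?_
  refine aux_le_domNum _ _ (fun D hD => aux_lower hm h3 _ ?_ D hD)
  intro a b hab
  rw [SimpleGraph.deleteEdges_adj, strong_adj_iff] at hab
  exact hab.1.2

lemma aux_domNum_G {m n : ℕ} (hm : 1 ≤ m) (hn : 3 ≤ n) (h3 : n % 3 = 0) :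
    ((⊤ : SimpleGraph (Fin m)) ⊠ pathGraph n).dominationNumber = n / 3 := by
  have h := aux_domNum_eq hm hn h3 ∅ (by simp only [Finset.card_empty, mul_zero]; omega)
  simpa using h

/-- **Lemma.** If `m ≥ 1`, `n ≥ 2` and `n ≡ 0 (mod 3)`, then `b(K_m ⊠ P_n) ≥ ⌈m/2⌉`;
equivalently, removing any set of fewer than `⌈m/2⌉` edges does not change the
domination number. -/
theorem bondage_ge_of_mod_three_eq_zero (m n : ℕ) (hm : 1 ≤ m) (hn : 2 ≤ n)
    (h3 : n % 3 = 0) :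
    (m + 1) / 2 ≤ ((⊤ : SimpleGraph (Fin m)) ⊠ pathGraph n).bondageNumber ∧
    ∀ Z : Finset (Sym2 (Fin m × Fin n)),
      (↑Z : Set (Sym2 (Fin m × Fin n))) ⊆
          ((⊤ : SimpleGraph (Fin m)) ⊠ pathGraph n).edgeSet →
      Z.card < (m + 1) / 2 →
      (((⊤ : SimpleGraph (Fin m)) ⊠ pathGraph n).deleteEdges ↑Z).dominationNumber =
        ((⊤ : SimpleGraph (Fin m)) ⊠ pathGraph n).dominationNumber := by
  classical
  have hn3 : 3 ≤ n := by omega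
  have part2 : ∀ Z : Finset (Sym2 (Fin m × Fin n)),
      (↑Z : Set (Sym2 (Fin m × Fin n))) ⊆
          ((⊤ : SimpleGraph (Fin m)) ⊠ pathGraph n).edgeSet →
      Z.card < (m + 1) / 2 →
      (((⊤ : SimpleGraph (Fin m)) ⊠ pathGraph n).deleteEdges ↑Z).dominationNumber =
        ((⊤ : SimpleGraph (Fin m)) ⊠ pathGraph n).dominationNumber := by
    intro Z _ hcard
    rw [aux_domNum_eq hm hn3 h3 Z (by omega), aux_domNum_G hm hn3 h3]
  refine ⟨?_, part2⟩
  set G := (⊤ : SimpleGraph (Fin m)) ⊠ pathGraph n with hG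
  apply le_csInf
  · set Z : Finset (Sym2 (Fin m × Fin n)) :=
      Finset.univ.filter (fun e => e ∈ G.edgeSet) with hZdef
    refine ⟨Z.card, Z, rfl, ?_, ?_⟩
    · intro e he
      rw [Finset.mem_coe, hZdef, Finset.mem_filter] at he
      exact he.2
    · rw [aux_domNum_G hm hn3 h3]
      have hlow : n / 3 + 1 ≤ (G.deleteEdges ↑Z).dominationNumber := by
        apply aux_le_domNum
        intro D hD
        have huniv : (Finset.univ : Finset (Fin m × Fin n)) ⊆ D := by
          intro v _
          rcases hD v with h | ⟨u, _, hadj⟩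
          · exact h
          · rw [SimpleGraph.deleteEdges_adj] at hadj
            exact absurd (by
              rw [Finset.mem_coe, hZdef, Finset.mem_filter]
              exact ⟨Finset.mem_univ _, hadj.1⟩) hadj.2
        have hcard : m * n ≤ D.card := by
          calc m * n = (Finset.univ : Finset (Fin m × Fin n)).card := by simp
            _ ≤ D.card := Finset.card_le_card huniv
        have hmn : n ≤ m * n := Nat.le_mul_of_pos_left n (by omega)
        omega
      omega
  · rintro k ⟨Z, rfl, hsub, hlt⟩
    by_contra hk
    push_neg at hk
    rw [part2 Z hsub hk] at hlt
    exact lt_irrefl _ hlt
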